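/- Let j_a and j_b be compatible positive complex structures on (E, ω). With respect to the inner products ⟨α, β⟩_j := i^{n(2−n)} · (α ∧ β̄ / ω^{∧n}) on Λ^{n,0}_j E*, the adjoint of Ψ_{j_a,j_b} is Ψ_{j_b,j_a}: for all α ∈ Λ^{n,0}_{j_a}E* and β ∈ Λ^{n,0}_{j_b}E*, ⟨Ψ_{j_a,j_b}(α), β⟩_{j_b} = ⟨α, Ψ_{j_b,j_a}(β)⟩_{j_a}. -/

import Mathlib

open Complex

noncomputable section

variable {E : Type*} [AddCommGroup E] [Module ℝ E]

/-- `j` is a complex structure on `E`: `j ∘ j = -id`. -/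
def IsCplxStruct (j : E →ₗ[ℝ] E) : Prop := ∀ x : E, j (j x) = -x

/-- `j` is compatible with the symplectic form `ω`. -/
def OmCompat (ω : E [⋀^Fin 2]→ₗ[ℝ] ℝ) (j : E →ₗ[ℝ] E) : Prop :=
  ∀ x y : E, ω ![j x, j y] = ω ![x, y]

/-- `j` is positive with respect to `ω`. -/
def OmPos (ω : E [⋀^Fin 2]→ₗ[ℝ] ℝ) (j : E →ₗ[ℝ] E) : Prop :=
  ∀ x : E, x ≠ 0 → 0 < ω ![x, j x]

/-- `ω` is nondegenerate. -/
def OmNondeg (ω : E [⋀^Fin 2]→ₗ[ℝ] ℝ) : Prop :=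
  ∀ x : E, (∀ y : E, ω ![x, y] = 0) → x = 0

/-- The complex conjugate of a `ℂ`-valued alternating form. -/
def conjAlt {p : ℕ} (α : E [⋀^Fin p]→ₗ[ℝ] ℂ) : E [⋀^Fin p]→ₗ[ℝ] ℂ :=
  Complex.conjAe.toLinearMap.compAlternatingMap α

/-- Wedge product of `ℂ`-valued alternating forms. -/
def wedgeC {p q : ℕ} (α : E [⋀^Fin p]→ₗ[ℝ] ℂ) (β : E [⋀^Fin q]→ₗ[ℝ] ℂ) :
    E [⋀^Fin (p + q)]→ₗ[ℝ] ℂ :=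
  ((LinearMap.mul' ℝ ℂ).compAlternatingMap (α.domCoprod β)).domDomCongr finSumFinEquiv

/-- The complexification of a real-valued alternating form. -/
def cplxForm {p : ℕ} (ω : E [⋀^Fin p]→ₗ[ℝ] ℝ) : E [⋀^Fin p]→ₗ[ℝ] ℂ :=
  (Algebra.linearMap ℝ ℂ).compAlternatingMap ω

/-- `ω^{∧ m}`. -/
def omPow (ω : E [⋀^Fin 2]→ₗ[ℝ] ℝ) : (m : ℕ) → E [⋀^Fin (2 * m)]→ₗ[ℝ] ℂ
  | 0 => (AlternatingMap.constOfIsEmpty ℝ E (Fin 0) 1).domDomCongr (finCongr (by ring))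
  | (m + 1) => (wedgeC (cplxForm ω) (omPow ω m)).domDomCongr (finCongr (by ring))

/-- `ω^{∧ n}`, reindexed by `Fin (n + n)`. -/
def topPow (ω : E [⋀^Fin 2]→ₗ[ℝ] ℝ) (n : ℕ) : E [⋀^Fin (n + n)]→ₗ[ℝ] ℂ :=
  (omPow ω n).domDomCongr (finCongr (by ring))

/-- `Λ^{n,0}_j E*`: the space of `ℂ`-valued alternating `p`-forms `α` with
`α (j v₁, v₂, …, v_p) = i • α (v₁, …, v_p)`. -/
def Lam (j : E →ₗ[ℝ] E) (p : ℕ) : Submodule ℂ (E [⋀^Fin p]→ₗ[ℝ] ℂ) where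
  carrier := {α | ∀ (v : Fin p → E) (i : Fin p), (i : ℕ) = 0 →
    α (Function.update v i (j (v i))) = Complex.I * α v}
  add_mem' := by
    intro a b ha hb v i hi
    simp only [AlternatingMap.add_apply, ha v i hi, hb v i hi]
    ring
  zero_mem' := by
    intro v i hi
    simp
  smul_mem' := by
    intro c a ha v i hi
    simp only [AlternatingMap.smul_apply, ha v i hi, smul_eq_mul]
    ring

/-- The scalar `α ∧ β̄ / ω^{∧ n}`. -/
def pairing (ω : E [⋀^Fin 2]→ₗ[ℝ] ℝ) (n : ℕ) (α β : E [⋀^Fin n]→ₗ[ℝ] ℂ) : ℂ :=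
  letI := Classical.propDecidable (∃ c : ℂ, wedgeC α (conjAlt β) = c • topPow ω n)
  if h : ∃ c : ℂ, wedgeC α (conjAlt β) = c • topPow ω n then h.choose else 0

/-- The defining property of `Ψ_{j_a,j_b}`. -/
def PsiProp (ω : E [⋀^Fin 2]→ₗ[ℝ] ℝ) (n : ℕ) (ja jb : E →ₗ[ℝ] E)
    (Ψ : Lam ja n →ₗ[ℂ] Lam jb n) : Prop :=
  ∀ α β : Lam ja n,
    wedgeC ((Ψ α : E [⋀^Fin n]→ₗ[ℝ] ℂ)) (conjAlt (β : E [⋀^Fin n]→ₗ[ℝ] ℂ)) =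
      wedgeC (α : E [⋀^Fin n]→ₗ[ℝ] ℂ) (conjAlt (β : E [⋀^Fin n]→ₗ[ℝ] ℂ))

/-- The Hermitian form `⟨α, β⟩_j := i^{n(2−n)} · (α ∧ β̄ / ω^{∧n})`. -/
def hermForm (ω : E [⋀^Fin 2]→ₗ[ℝ] ℝ) (n : ℕ) (α β : E [⋀^Fin n]→ₗ[ℝ] ℂ) : ℂ :=
  Complex.I ^ ((n : ℤ) * (2 - (n : ℤ))) * pairing ω n α β


section Helpers

open Equiv

theorem alt_ddc {ι R M N : Type*} [Fintype ι] [DecidableEq ι]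
    [CommSemiring R] [AddCommMonoid M] [Module R M] [AddCommGroup N] [Module R N]
    (m : MultilinearMap R (fun _ : ι => M) N) (σ₀ : Equiv.Perm ι) :
    MultilinearMap.alternatization (m.domDomCongr σ₀)
      = Equiv.Perm.sign σ₀ • MultilinearMap.alternatization m := by
  ext v
  rw [AlternatingMap.smul_apply, MultilinearMap.alternatization_apply,
    MultilinearMap.alternatization_apply, Finset.smul_sum]
  refine Fintype.sum_equiv (Equiv.mulRight σ₀) _ _ (fun σ => ?_)
  rw [← MultilinearMap.domDomCongr_mul]
  simp only [Equiv.coe_mulRight, Equiv.Perm.sign_mul, smul_smul]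
  congr 1
  rw [mul_comm (Perm.sign σ), ← mul_assoc, Int.units_mul_self, one_mul]

variable {n : ℕ}

/-- The un-reindexed wedge. -/
def W (X Y : E [⋀^Fin n]→ₗ[ℝ] ℂ) : E [⋀^(Fin n ⊕ Fin n)]→ₗ[ℝ] ℂ :=
  (LinearMap.mul' ℝ ℂ).compAlternatingMap (X.domCoprod Y)

/-- The raw multilinear product map. -/
def Wraw (X Y : E [⋀^Fin n]→ₗ[ℝ] ℂ) : MultilinearMap ℝ (fun _ : Fin n ⊕ Fin n => E) ℂ :=
  (LinearMap.mul' ℝ ℂ).compMultilinearMap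
    (MultilinearMap.domCoprod (X : MultilinearMap ℝ (fun _ : Fin n => E) ℂ)
      (Y : MultilinearMap ℝ (fun _ : Fin n => E) ℂ))

theorem lemA (X Y : E [⋀^Fin n]→ₗ[ℝ] ℂ) :
    (Nat.factorial n * Nat.factorial n) • W X Y
      = MultilinearMap.alternatization (Wraw X Y) := by
  rw [Wraw, LinearMap.compMultilinearMap_alternatization,
    MultilinearMap.domCoprod_alternization_eq]
  ext v
  simp [W, Fintype.card_fin]

theorem nsmul_cancel {m : ℕ} {k : ℕ} (hk : k ≠ 0) (f g : E [⋀^(Fin m ⊕ Fin m)]→ₗ[ℝ] ℂ)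
    (h : k • f = k • g) : f = g := by
  ext v
  have := congrArg (fun F => F v) h
  simp only [AlternatingMap.smul_apply, nsmul_eq_mul] at this
  exact mul_left_cancel₀ (Nat.cast_ne_zero.mpr hk) this

/-- conjugation for arbitrary index types -/
def conjW {ι : Type*} (f : E [⋀^ι]→ₗ[ℝ] ℂ) : E [⋀^ι]→ₗ[ℝ] ℂ :=
  Complex.conjAe.toLinearMap.compAlternatingMap f

theorem conjW_eq_conjAlt {p : ℕ} (f : E [⋀^Fin p]→ₗ[ℝ] ℂ) : conjW f = conjAlt f := rfl

theorem conjAlt_W (X Y : E [⋀^Fin n]→ₗ[ℝ] ℂ) :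
    conjW (W X Y) = W (conjAlt X) (conjAlt Y) := by
  refine nsmul_cancel (k := Nat.factorial n * Nat.factorial n)
    (by positivity) _ _ ?_
  have h1 : (Nat.factorial n * Nat.factorial n) • conjW (W X Y)
      = conjW ((Nat.factorial n * Nat.factorial n) • W X Y) := by
    ext v; simp [conjW, map_nsmul]
  rw [h1, lemA, lemA]
  have h2 : conjW (MultilinearMap.alternatization (Wraw X Y))
      = Complex.conjAe.toLinearMap.compAlternatingMap
          (MultilinearMap.alternatization (Wraw X Y)) := rfl
  rw [h2, ← LinearMap.compMultilinearMap_alternatization]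
  congr 1
  ext v
  simp [Wraw, conjAlt, conjW, MultilinearMap.domCoprod_apply]

theorem W_comm (X Y : E [⋀^Fin n]→ₗ[ℝ] ℂ) :
    W Y X = Equiv.Perm.sign (Equiv.sumComm (Fin n) (Fin n)) • W X Y := by
  refine nsmul_cancel (k := Nat.factorial n * Nat.factorial n)
    (by positivity) _ _ ?_
  rw [smul_comm, lemA]
  have h0 : Wraw Y X = (Wraw X Y).domDomCongr (Equiv.sumComm (Fin n) (Fin n)) := by
    ext v
    simp [Wraw, MultilinearMap.domCoprod_apply, mul_comm]
    rfl
  rw [h0, alt_ddc, ← lemA, smul_comm]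

theorem wedge_eq (X Y : E [⋀^Fin n]→ₗ[ℝ] ℂ) :
    wedgeC X Y = (W X Y).domDomCongr finSumFinEquiv := rfl

theorem conjAlt_ddc (f : E [⋀^(Fin n ⊕ Fin n)]→ₗ[ℝ] ℂ) :
    conjAlt (f.domDomCongr finSumFinEquiv) = (conjW f).domDomCongr finSumFinEquiv := rfl

theorem smul_ddc (s : ℤˣ) (f : E [⋀^(Fin n ⊕ Fin n)]→ₗ[ℝ] ℂ) :
    (s • f).domDomCongr finSumFinEquiv = s • f.domDomCongr finSumFinEquiv := rfl

theorem wedge_comm (X Y : E [⋀^Fin n]→ₗ[ℝ] ℂ) :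
    wedgeC Y X = Equiv.Perm.sign (Equiv.sumComm (Fin n) (Fin n)) • wedgeC X Y := by
  rw [wedge_eq, wedge_eq, W_comm, smul_ddc]

theorem wedge_conj (X Y : E [⋀^Fin n]→ₗ[ℝ] ℂ) :
    conjAlt (wedgeC X Y) = wedgeC (conjAlt X) (conjAlt Y) := by
  rw [wedge_eq, wedge_eq, conjAlt_ddc, conjAlt_W]

theorem conjAlt_conjAlt {p : ℕ} (X : E [⋀^Fin p]→ₗ[ℝ] ℂ) : conjAlt (conjAlt X) = X := by
  ext v; simp [conjAlt]

theorem wedge_flip (X Y : E [⋀^Fin n]→ₗ[ℝ] ℂ) :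
    conjAlt (wedgeC Y (conjAlt X))
      = Equiv.Perm.sign (Equiv.sumComm (Fin n) (Fin n)) • wedgeC X (conjAlt Y) := by
  rw [wedge_conj, conjAlt_conjAlt, wedge_comm]

end Helpers

/-- the adjoint of `Ψ_{j_a,j_b}` is `Ψ_{j_b,j_a}`:
`⟨Ψ_{j_a,j_b} α, β⟩_{j_b} = ⟨α, Ψ_{j_b,j_a} β⟩_{j_a}`. -/
theorem statement3 {E : Type*} [AddCommGroup E] [Module ℝ E] [FiniteDimensional ℝ E]
    (n : ℕ) (hn : 0 < n) (ω : E [⋀^Fin 2]→ₗ[ℝ] ℝ)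
    (hdim : Module.finrank ℝ E = 2 * n) (hnd : OmNondeg ω)
    (ja jb : E →ₗ[ℝ] E) (hja : IsCplxStruct ja) (hjb : IsCplxStruct jb)
    (hca : OmCompat ω ja) (hcb : OmCompat ω jb)
    (hpa : OmPos ω ja) (hpb : OmPos ω jb)
    (Ψab : Lam ja n →ₗ[ℂ] Lam jb n) (hΨab : PsiProp ω n ja jb Ψab)
    (Ψba : Lam jb n →ₗ[ℂ] Lam ja n) (hΨba : PsiProp ω n jb ja Ψba) :
    ∀ (α : Lam ja n) (β : Lam jb n),
      hermForm ω n ((Ψab α : E [⋀^Fin n]→ₗ[ℝ] ℂ)) (β : E [⋀^Fin n]→ₗ[ℝ] ℂ) =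
        hermForm ω n (α : E [⋀^Fin n]→ₗ[ℝ] ℂ) ((Ψba β : E [⋀^Fin n]→ₗ[ℝ] ℂ)) := by
  intro α β
  have e1 := hΨba β (Ψab α)
  have e2 := hΨab α (Ψba β)
  have f1 := wedge_flip (X := ((Ψab α : E [⋀^Fin n]→ₗ[ℝ] ℂ))) (Y := (β : E [⋀^Fin n]→ₗ[ℝ] ℂ))
  have f2 := wedge_flip (X := ((Ψab α : E [⋀^Fin n]→ₗ[ℝ] ℂ)))
    (Y := ((Ψba β : E [⋀^Fin n]→ₗ[ℝ] ℂ)))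
  have e1' := congrArg conjAlt e1
  rw [f1, f2] at e1'
  have key : wedgeC ((Ψab α : E [⋀^Fin n]→ₗ[ℝ] ℂ)) (conjAlt (β : E [⋀^Fin n]→ₗ[ℝ] ℂ))
      = wedgeC (α : E [⋀^Fin n]→ₗ[ℝ] ℂ) (conjAlt ((Ψba β : E [⋀^Fin n]→ₗ[ℝ] ℂ))) := by
    have := smul_left_cancel (Equiv.Perm.sign (Equiv.sumComm (Fin n) (Fin n))) e1'
    rw [← this, e2]
  have hp : pairing ω n ((Ψab α : E [⋀^Fin n]→ₗ[ℝ] ℂ)) (β : E [⋀^Fin n]→ₗ[ℝ] ℂ)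
      = pairing ω n (α : E [⋀^Fin n]→ₗ[ℝ] ℂ) ((Ψba β : E [⋀^Fin n]→ₗ[ℝ] ℂ)) := by
    unfold pairing
    rw [key]
  unfold hermForm
  rw [hp]

end
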